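/- Let n ≥ 2 and let V_0, V_1, …, V_n be independent uniform random points on the unit sphere S^{n−1} ⊂ ℝ^n. Define s(V_0,…,V_n) = +1 if the origin lies in the interior of the convex hull of V_0,…,V_n and s(V_0,…,V_n) = −1 otherwise. Then E[ s(V_0,…,V_n) · Δ_n(0, V_1, …, V_n) · 1_{Pointy(V_0; V_1,…,V_n)} ] = 0. -/

import Mathlib

open MeasureTheory Metric
open scoped Pointwise

noncomputable section

/-- `Euc n` is the Euclidean space `ℝ^n`. -/
abbrev Euc (n : ℕ) := EuclideanSpace ℝ (Fin n)

/-- The uniform (rotation-invariant) probability measure on the unit sphere of `ℝ^n`. -/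
def sphereUniform (n : ℕ) : Measure (Metric.sphere (0 : Euc n) 1) :=
  ((volume : Measure (Euc n)).toSphere Set.univ)⁻¹ • (volume : Measure (Euc n)).toSphere

/-- The pointy condition: the origin belongs to the interior, computed within the hyperplane
`v₀ᗮ`, of the convex hull of the orthogonal projections of the points `v i` onto `v₀ᗮ`. -/
def Pointy {n k : ℕ} (v₀ : Euc n) (v : Fin k → Euc n) : Prop :=
  (0 : (Submodule.span ℝ {v₀})ᗮ) ∈ interior (convexHull ℝ
    (Set.range fun i => Submodule.orthogonalProjection (Submodule.span ℝ {v₀})ᗮ (v i)))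

open scoped Classical in
/-- Real-valued indicator of a proposition. -/
def indic (P : Prop) : ℝ := if P then 1 else 0

open scoped Classical in
/-- The sign `s = +1` if `P` holds and `−1` otherwise. -/
def sgn (P : Prop) : ℝ := if P then 1 else -1

/-! ### Measure-theoretic lemmas -/

instance sphereUniform_finite (n : ℕ) : IsFiniteMeasure (sphereUniform n) := by
  constructor
  rw [sphereUniform, Measure.smul_apply, smul_eq_mul]
  rcases eq_or_ne ((volume : Measure (Euc n)).toSphere Set.univ) 0 with h | h
  · simp [h]
  · rw [ENNReal.inv_mul_cancel h (measure_ne_top _ _)]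
    exact ENNReal.one_lt_top

lemma sphere_submodule_null (n : ℕ) {W : Submodule ℝ (Euc n)} (hW : W ≠ ⊤) :
    sphereUniform n {x : sphere (0 : Euc n) 1 | (x : Euc n) ∈ W} = 0 := by
  have hWc : IsClosed (W : Set (Euc n)) := Submodule.closed_of_finiteDimensional W
  have hs : MeasurableSet {x : sphere (0 : Euc n) 1 | (x : Euc n) ∈ W} :=
    hWc.measurableSet.preimage measurable_subtype_coe
  have h0 : (volume : Measure (Euc n)).toSphere {x : sphere (0 : Euc n) 1 | (x : Euc n) ∈ W}
      = 0 := by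
    rw [Measure.toSphere_apply' _ hs]
    have hsub : Set.Ioo (0:ℝ) 1 •
        (Subtype.val '' {x : sphere (0 : Euc n) 1 | (x : Euc n) ∈ W}) ⊆ (W : Set (Euc n)) := by
      rintro y hy
      obtain ⟨r, hr, z, hz, rfl⟩ := Set.mem_smul.mp hy
      obtain ⟨x, hx, rfl⟩ := hz
      exact W.smul_mem r hx
    rw [measure_mono_null hsub (Measure.addHaar_submodule volume W hW), mul_zero]
  rw [sphereUniform, Measure.smul_apply, h0, smul_eq_mul, mul_zero]

lemma map_neg_sphereUniform (n : ℕ) :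
    Measure.map (fun x : sphere (0 : Euc n) 1 => -x) (sphereUniform n) = sphereUniform n := by
  have hmeas : Measurable (fun x : sphere (0 : Euc n) 1 => -x) := continuous_neg.measurable
  have hts : Measure.map (fun x : sphere (0 : Euc n) 1 => -x)
      (volume : Measure (Euc n)).toSphere = (volume : Measure (Euc n)).toSphere := by
    ext s hs
    rw [Measure.map_apply hmeas hs]
    have hns : MeasurableSet ((fun x : sphere (0 : Euc n) 1 => -x) ⁻¹' s) := hs.preimage hmeas
    rw [Measure.toSphere_apply' _ hns, Measure.toSphere_apply' _ hs]
    have himg : Subtype.val '' ((fun x : sphere (0 : Euc n) 1 => -x) ⁻¹' s)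
        = -(Subtype.val '' s) := by
      ext y
      constructor
      · rintro ⟨x, hx, rfl⟩
        rw [Set.mem_neg]
        exact ⟨-x, hx, by rw [coe_neg_sphere]⟩
      · intro hy
        rw [Set.mem_neg] at hy
        obtain ⟨x, hx, hxy⟩ := hy
        refine ⟨-x, ?_, ?_⟩
        · show -(-x) ∈ s
          rw [neg_neg]; exact hx
        · rw [coe_neg_sphere, hxy, neg_neg]
    rw [himg, Set.smul_neg, Measure.measure_neg]
  rw [sphereUniform, Measure.map_smul, hts]

lemma pi_succ_null {S : Type*} [MeasurableSpace S] (μ : Measure S) [IsFiniteMeasure μ] {k : ℕ}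
    {s : Set (Fin (k + 1) → S)} (hs : MeasurableSet s)
    (h : ∀ᵐ w ∂(Measure.pi fun _ : Fin k => μ), μ {x | Fin.cons x w ∈ s} = 0) :
    Measure.pi (fun _ : Fin (k + 1) => μ) s = 0 := by
  set ν : Measure (Fin k → S) := Measure.pi fun _ : Fin k => μ with hν
  have hpres := measurePreserving_piFinSuccAbove (fun _ : Fin (k + 1) => μ) 0
  set e := MeasurableEquiv.piFinSuccAbove (fun _ : Fin (k + 1) => S) 0 with he
  have hsymm : ∀ (x : S) (w : Fin k → S), e.symm (x, w) = Fin.cons x w := by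
    intro x w
    show (Fin.insertNthEquiv (fun _ : Fin (k+1) => S) 0) (x, w) = Fin.cons x w
    rw [Fin.insertNthEquiv_zero]
    rfl
  have hsm : MeasurableSet (e.symm ⁻¹' s) := hs.preimage e.symm.measurable
  have h1 : Measure.pi (fun _ : Fin (k + 1) => μ) s
      = (μ.prod ν) (e.symm ⁻¹' s) := by
    rw [← hpres.map_eq, Measure.map_apply e.measurable hsm]
    congr 1
    ext V
    simp [Set.mem_preimage, MeasurableEquiv.symm_apply_apply]
  rw [h1]
  have h2 : (μ.prod ν) (e.symm ⁻¹' s) = (ν.prod μ) (Prod.swap ⁻¹' (e.symm ⁻¹' s)) := by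
    rw [← Measure.prod_swap, Measure.map_apply measurable_swap hsm]
  rw [h2, Measure.measure_prod_null (hsm.preimage measurable_swap)]
  filter_upwards [h] with w hw
  have : Prod.mk w ⁻¹' (Prod.swap ⁻¹' (e.symm ⁻¹' s)) = {x | Fin.cons x w ∈ s} := by
    ext x
    simp [Set.mem_preimage, Prod.swap, hsymm]
  rw [this]
  exact hw

/-! ### Linear independence: Gram determinant characterization -/

lemma gram_lemma {n m : ℕ} (w : Fin m → Euc n) :
    ¬ LinearIndependent ℝ w ↔
      (Matrix.of fun i j => (inner ℝ (w i) (w j) : ℝ)).det = 0 := by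
  classical
  rw [← Matrix.exists_mulVec_eq_zero_iff]
  rw [Fintype.not_linearIndependent_iff]
  have hmv : ∀ c : Fin m → ℝ, ∀ j,
      (Matrix.of fun i j => (inner ℝ (w i) (w j) : ℝ)).mulVec c j
        = (inner ℝ (w j) (∑ l, c l • w l) : ℝ) := by
    intro c j
    have h1 : (Matrix.of fun i j => (inner ℝ (w i) (w j) : ℝ)).mulVec c j
        = ∑ l, (inner ℝ (w j) (w l) : ℝ) * c l := rfl
    rw [h1, inner_sum]
    refine Finset.sum_congr rfl fun l _ => ?_
    rw [real_inner_smul_right]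
    ring
  constructor
  · rintro ⟨c, hc, i, hi⟩
    refine ⟨c, fun h => hi (by rw [h]; rfl), ?_⟩
    funext j
    rw [hmv c j, hc, inner_zero_right]
    rfl
  · rintro ⟨c, hc0, hc⟩
    have hy : (∑ l, c l • w l) = 0 := by
      have h1 : (inner ℝ (∑ l, c l • w l) (∑ l, c l • w l) : ℝ) = 0 := by
        rw [sum_inner]
        have : ∀ l, (inner ℝ (c l • w l) (∑ l', c l' • w l') : ℝ) = 0 := by
          intro l
          rw [real_inner_smul_left, ← hmv c l]
          rw [congrFun hc l]
          simp
        simp [this]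
      exact inner_self_eq_zero.mp h1
    obtain ⟨i, hi⟩ := Function.ne_iff.mp hc0
    exact ⟨c, hy, i, hi⟩

lemma closed_not_linIndep {n m : ℕ} {α : Type*} [TopologicalSpace α]
    {g : Fin m → α → Euc n} (hg : ∀ i, Continuous (g i)) :
    IsClosed {a | ¬ LinearIndependent ℝ (fun i => g i a)} := by
  have : {a | ¬ LinearIndependent ℝ (fun i => g i a)}
      = (fun a => (Matrix.of fun i j => (inner ℝ (g i a) (g j a) : ℝ)).det) ⁻¹' {0} := by
    ext a
    simp only [Set.mem_setOf_eq, Set.mem_preimage, Set.mem_singleton_iff]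
    exact gram_lemma _
  rw [this]
  exact isClosed_singleton.preimage
    ((continuous_matrix fun i j => (hg i).inner (hg j)).matrix_det)

lemma dep_null (n : ℕ) : ∀ k, k ≤ n →
    Measure.pi (fun _ : Fin k => sphereUniform n)
      {w | ¬ LinearIndependent ℝ (fun i => ((w i : Euc n)))} = 0 := by
  intro k
  induction k with
  | zero =>
    intro _
    have : {w : Fin 0 → sphere (0 : Euc n) 1 |
        ¬ LinearIndependent ℝ (fun i => ((w i : Euc n)))} = ∅ := by
      ext w
      simp [linearIndependent_empty_type]
    rw [this, measure_empty]
  | succ k ih =>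
    intro hk1
    have hcont : ∀ i : Fin (k + 1),
        Continuous (fun w : Fin (k+1) → sphere (0 : Euc n) 1 => (w i : Euc n)) := by
      intro i
      exact (continuous_apply i).subtype_val
    refine pi_succ_null _ ((closed_not_linIndep hcont).measurableSet) ?_
    have hae : ∀ᵐ w ∂(Measure.pi fun _ : Fin k => sphereUniform n),
        LinearIndependent ℝ (fun i => ((w i : Euc n))) := by
      rw [ae_iff]
      exact ih (Nat.le_of_succ_le hk1)
    filter_upwards [hae] with w hw
    have hset : {x : sphere (0 : Euc n) 1 | Fin.cons x w ∈
          {w' : Fin (k+1) → sphere (0 : Euc n) 1 |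
            ¬ LinearIndependent ℝ (fun i => ((w' i : Euc n)))}}
        ⊆ {x : sphere (0 : Euc n) 1 |
            (x : Euc n) ∈ Submodule.span ℝ (Set.range fun i => (w i : Euc n))} := by
      intro x hx
      simp only [Set.mem_setOf_eq] at hx ⊢
      by_contra hxs
      apply hx
      have hrw : (fun i : Fin (k+1) => (((Fin.cons x w : Fin (k+1) → sphere (0 : Euc n) 1) i : sphere (0 : Euc n) 1) : Euc n))
          = Fin.cons (x : Euc n) (fun i => (w i : Euc n)) := by
        funext i
        induction i using Fin.cases with
        | zero => simp
        | succ j => simp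
      rw [hrw]
      exact linearIndependent_fin_cons.mpr ⟨hw, hxs⟩
    refine measure_mono_null hset (sphere_submodule_null n ?_)
    intro htop
    have h1 : Module.finrank ℝ
        (Submodule.span ℝ (Set.range fun i => (w i : Euc n))) ≤ k := by
      have := finrank_range_le_card (R := ℝ) (fun i => (w i : Euc n))
      simpa [Set.finrank] using this
    rw [htop, finrank_top, finrank_euclideanSpace_fin] at h1
    omega

/-! ### Geometric lemmas -/

lemma pointy_neg_iff {n k : ℕ} (v₀ : Euc n) (v : Fin k → Euc n) :
    Pointy (-v₀) v ↔ Pointy v₀ v := by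
  have h : Submodule.span ℝ {-v₀} = Submodule.span ℝ {v₀} := by
    rw [← Set.neg_singleton, Submodule.span_neg]
  exact iff_of_eq (congrArg (fun W : Submodule ℝ (Euc n) =>
    (0 : Wᗮ) ∈ interior (convexHull ℝ
      (Set.range fun i => Submodule.orthogonalProjection Wᗮ (v i)))) h)

lemma neg_lemma {n : ℕ} (v₀ : Euc n) (v : Fin n → Euc n)
    (f : Euc n →ₗ[ℝ] ℝ) (hf : ∀ i, f (v i) = 1) (hf0 : 0 < f v₀) :
    (0 : Euc n) ∉ convexHull ℝ (Set.range (Fin.cons v₀ v : Fin (n+1) → Euc n)) := by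
  intro h
  have hsub : convexHull ℝ (Set.range (Fin.cons v₀ v : Fin (n+1) → Euc n))
      ⊆ {x | 0 < f x} := by
    apply convexHull_min
    · rintro y ⟨i, rfl⟩
      induction i using Fin.cases with
      | zero => simpa using hf0
      | succ j => simp [Fin.cons_succ, hf j]
    · exact convex_halfSpace_gt (LinearMap.isLinear f) 0
  have := hsub h
  simp at this

lemma pos_lemma {n : ℕ} (hn : 1 ≤ n) (v₀ : Euc n) (hv₀ : ‖v₀‖ = 1)
    (v : Fin n → Euc n) (hind : LinearIndependent ℝ v)
    (f : Euc n →ₗ[ℝ] ℝ) (hf : ∀ i, f (v i) = 1) (hf0 : f v₀ < 0)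
    (hp : Pointy v₀ v) :
    (0 : Euc n) ∈ interior (convexHull ℝ
      (Set.range (Fin.cons v₀ v : Fin (n+1) → Euc n))) := by
  classical
  haveI : Fact (Module.finrank ℝ (Euc n) = (n - 1) + 1) :=
    ⟨by rw [finrank_euclideanSpace_fin]; omega⟩
  have hv₀ne : v₀ ≠ 0 := by
    intro h; rw [h, norm_zero] at hv₀; norm_num at hv₀
  have hrank : Module.finrank ℝ (Submodule.span ℝ {v₀})ᗮ = n - 1 :=
    Submodule.finrank_orthogonal_span_singleton hv₀ne
  set P : Fin n → (Submodule.span ℝ {v₀})ᗮ :=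
    fun i => Submodule.orthogonalProjection (Submodule.span ℝ {v₀})ᗮ (v i) with hP
  have hp' : (0 : (Submodule.span ℝ {v₀})ᗮ) ∈ interior (convexHull ℝ (Set.range P)) := hp
  have hspan : affineSpan ℝ (Set.range P) = ⊤ :=
    interior_convexHull_nonempty_iff_affineSpan_eq_top.mp ⟨0, hp'⟩
  have hcard : Fintype.card (Fin n) = (n - 1) + 1 := by simp; omega
  have haff : AffineIndependent ℝ P := by
    rw [affineIndependent_iff_finrank_vectorSpan_eq ℝ P hcard]
    rw [← direction_affineSpan, hspan, AffineSubspace.direction_top, finrank_top]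
    exact hrank
  obtain ⟨lam, hlampos, hsum, hcomb'⟩ :
      ∃ lam : Fin n → ℝ, (∀ i, 0 < lam i) ∧ (∑ i, lam i = 1) ∧
        (∑ i, lam i • ((P i : Euc n)) = 0) := by
    set b : AffineBasis (Fin n) ℝ (Submodule.span ℝ {v₀})ᗮ := ⟨P, haff, hspan⟩ with hb
    have hbcoe : ⇑b = P := rfl
    refine ⟨fun i => b.coord i 0, ?_, b.sum_coord_apply_eq_one 0, ?_⟩
    · have hic := b.interior_convexHull
      rw [hbcoe] at hic
      intro i
      have h0 : (0 : (Submodule.span ℝ {v₀})ᗮ) ∈ {x | ∀ i, 0 < b.coord i x} := by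
        rw [← hic]; exact hp'
      exact h0 i
    · have h1 := b.affineCombination_coord_eq_self (0 : (Submodule.span ℝ {v₀})ᗮ)
      rw [Finset.univ.affineCombination_eq_linear_combination _ _
        (b.sum_coord_apply_eq_one 0)] at h1
      have h2 := congrArg ((Submodule.span ℝ {v₀})ᗮ.subtype) h1
      simpa [hbcoe, map_sum] using h2
  have hPval : ∀ i, (P i : Euc n) = v i - (inner ℝ v₀ (v i) : ℝ) • v₀ := by
    intro i
    have h4 : ((Submodule.orthogonalProjection (Submodule.span ℝ {v₀}) (v i) : Euc n))
        = ((inner ℝ v₀ (v i) : ℝ) / ((‖v₀‖ : ℝ) ^ 2)) • v₀ :=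
      Submodule.starProjection_singleton ℝ (v i)
    rw [hP]
    show (Submodule.span ℝ {v₀})ᗮ.starProjection (v i) = _
    rw [Submodule.starProjection_orthogonal_val, Submodule.starProjection_singleton, hv₀]
    norm_num
  set c : ℝ := ∑ i, lam i * (inner ℝ v₀ (v i) : ℝ) with hcdef
  have hc : ∑ i, lam i • v i = c • v₀ := by
    simp only [hPval, smul_sub, smul_smul] at hcomb'
    rw [Finset.sum_sub_distrib, ← Finset.sum_smul, sub_eq_zero] at hcomb'
    exact hcomb'
  have hfc : c * f v₀ = 1 := by
    have h3 := congrArg f hc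
    rw [map_sum] at h3
    simp only [LinearMap.map_smul, smul_eq_mul, hf, mul_one] at h3
    rw [hsum] at h3
    exact h3.symm
  have hcneg : c < 0 := by
    rcases lt_trichotomy c 0 with h | h | h
    · exact h
    · rw [h, zero_mul] at hfc; norm_num at hfc
    · nlinarith
  have ht : (0:ℝ) < 1 - c := by linarith
  obtain ⟨mu, hmupos, hmusum, hmucomb⟩ :
      ∃ mu : Fin (n+1) → ℝ, (∀ i, 0 < mu i) ∧ (∑ i, mu i = 1) ∧
        (∑ i, mu i • (Fin.cons v₀ v : Fin (n+1) → Euc n) i = 0) := by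
    refine ⟨Fin.cons (-c/(1-c)) (fun i => lam i / (1-c)), ?_, ?_, ?_⟩
    · intro i
      induction i using Fin.cases with
      | zero =>
        show 0 < -c/(1-c)
        exact div_pos (by linarith) ht
      | succ j =>
        show 0 < lam j / (1-c)
        exact div_pos (hlampos j) ht
    · rw [Fin.sum_univ_succ]
      simp only [Fin.cons_zero, Fin.cons_succ]
      rw [← Finset.sum_div, hsum]
      field_simp
      ring
    · rw [Fin.sum_univ_succ]
      simp only [Fin.cons_zero, Fin.cons_succ]
      have hstep : ∑ j : Fin n, (lam j / (1-c)) • v j = ((1-c)⁻¹ * c) • v₀ := by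
        have hj : ∀ j : Fin n, (lam j / (1-c)) • v j = (1-c)⁻¹ • (lam j • v j) := by
          intro j; rw [smul_smul]; congr 1; field_simp
        simp only [hj]
        rw [← Finset.smul_sum, hc, smul_smul]
      rw [hstep, ← add_smul]
      have hz : -c / (1-c) + (1-c)⁻¹ * c = 0 := by field_simp; ring
      rw [hz, zero_smul]
  have haffx : AffineIndependent ℝ (Fin.cons v₀ v : Fin (n+1) → Euc n) := by
    rw [affineIndependent_iff_of_fintype]
    intro w hw hcomb0
    rw [Finset.univ.weightedVSub_eq_linear_combination hw] at hcomb0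
    have hfw := congrArg f hcomb0
    rw [map_sum, map_zero] at hfw
    rw [Fin.sum_univ_succ] at hfw
    simp only [Fin.cons_zero, Fin.cons_succ, LinearMap.map_smul, smul_eq_mul, hf,
      mul_one] at hfw
    have hsw := hw
    rw [Fin.sum_univ_succ] at hsw
    have hw0 : w 0 = 0 := by
      have hfact : w 0 * (f v₀ - 1) = 0 := by linear_combination hfw - hsw
      rcases mul_eq_zero.mp hfact with h | h
      · exact h
      · exfalso; linarith
    have hrest : ∀ j : Fin n, w j.succ = 0 := by
      have hcomb1 : ∑ j : Fin n, w j.succ • v j = 0 := by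
        rw [Fin.sum_univ_succ] at hcomb0
        simpa [Fin.cons_zero, Fin.cons_succ, hw0] using hcomb0
      exact Fintype.linearIndependent_iff.mp hind (fun j => w j.succ) hcomb1
    intro i
    induction i using Fin.cases with
    | zero => exact hw0
    | succ j => exact hrest j
  have hspanx : affineSpan ℝ (Set.range (Fin.cons v₀ v : Fin (n+1) → Euc n)) = ⊤ := by
    rw [AffineIndependent.affineSpan_eq_top_iff_card_eq_finrank_add_one haffx]
    simp [finrank_euclideanSpace_fin]
  have hfinal : (0 : Euc n) ∈ interior (convexHull ℝ
      (Set.range ⇑(⟨Fin.cons v₀ v, haffx, hspanx⟩ : AffineBasis (Fin (n+1)) ℝ (Euc n)))) := by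
    set B : AffineBasis (Fin (n+1)) ℝ (Euc n) := ⟨Fin.cons v₀ v, haffx, hspanx⟩ with hB
    have hBcoord : ∀ i, B.coord i 0 = mu i := by
      intro i
      have h0 : (0 : Euc n)
          = Finset.univ.affineCombination ℝ (Fin.cons v₀ v : Fin (n+1) → Euc n) mu := by
        rw [Finset.univ.affineCombination_eq_linear_combination _ _ hmusum, hmucomb]
      rw [h0]
      exact AffineBasis.coord_apply_combination_of_mem B (Finset.mem_univ i) hmusum
    rw [B.interior_convexHull]
    intro i
    rw [hBcoord i]
    exact hmupos i
  exact hfinal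

/-! ### Linear functional taking value 1 on a basis -/

lemma exists_f {n : ℕ} [NeZero n] (v : Fin n → Euc n) (hind : LinearIndependent ℝ v) :
    ∃ f : Euc n →ₗ[ℝ] ℝ, ∀ i, f (v i) = 1 := by
  have hcard : Fintype.card (Fin n) = Module.finrank ℝ (Euc n) := by
    simp [finrank_euclideanSpace_fin]
  let b := basisOfLinearIndependentOfCardEqFinrank hind hcard
  refine ⟨b.sumCoords, fun i => ?_⟩
  have hb : b i = v i := by
    show (basisOfLinearIndependentOfCardEqFinrank hind hcard) i = v i
    rw [coe_basisOfLinearIndependentOfCardEqFinrank]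
  rw [← hb, Module.Basis.sumCoords_self_apply]

lemma mem_span_diffs_of_f_eq_zero {n : ℕ} [NeZero n] (v : Fin n → Euc n)
    (hind : LinearIndependent ℝ v)
    (f : Euc n →ₗ[ℝ] ℝ) (hf : ∀ i, f (v i) = 1) {x : Euc n} (hx : f x = 0) :
    x ∈ Submodule.span ℝ (Set.range fun i => v i - v 0) := by
  classical
  have hcard : Fintype.card (Fin n) = Module.finrank ℝ (Euc n) := by
    simp [finrank_euclideanSpace_fin]
  let b := basisOfLinearIndependentOfCardEqFinrank hind hcard
  have hb : ∀ i, b i = v i := fun i => by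
    show (basisOfLinearIndependentOfCardEqFinrank hind hcard) i = v i
    rw [coe_basisOfLinearIndependentOfCardEqFinrank]
  have hrepr : x = ∑ i, b.repr x i • v i := by
    conv_lhs => rw [← b.sum_repr x]
    exact Finset.sum_congr rfl fun i _ => by rw [hb]
  have hsd : ∑ i, b.repr x i = 0 := by
    have h1 := congrArg f hrepr
    rw [map_sum] at h1
    simp only [LinearMap.map_smul, smul_eq_mul, hf, mul_one] at h1
    rw [hx] at h1
    exact h1.symm
  have hx2 : x = ∑ i, b.repr x i • (v i - v 0) := by
    simp only [smul_sub]
    rw [Finset.sum_sub_distrib, ← Finset.sum_smul, hsd, zero_smul, sub_zero]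
    exact hrepr
  rw [hx2]
  exact Submodule.sum_mem _ fun i _ =>
    Submodule.smul_mem _ _ (Submodule.subset_span ⟨i, rfl⟩)


lemma dep_of_mem_span {n : ℕ} [NeZero n] (w : Fin n → Euc n) (x : Euc n)
    (hx : x ∈ Submodule.span ℝ (Set.range fun i => w i - w 0)) :
    ¬ LinearIndependent ℝ (fun i : Fin n => if i = 0 then x else w i - w 0) := by
  classical
  obtain ⟨c, hc⟩ := (Submodule.mem_span_range_iff_exists_fun ℝ).mp hx
  set h : Fin n → Euc n := fun i => if i = 0 then x else w i - w 0 with hh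
  set e : Fin n → ℝ := fun i => if i = 0 then 1 else -(c i) with he
  have hcomb : ∑ i, e i • h i = 0 := by
    rw [← Finset.add_sum_erase _ _ (Finset.mem_univ (0 : Fin n))]
    have h0 : e 0 • h 0 = x := by simp [he, hh]
    rw [h0]
    have hterm : ∀ i ∈ Finset.univ.erase (0 : Fin n),
        e i • h i = -(c i • (w i - w 0)) := by
      intro i hi
      have hi0 : i ≠ 0 := Finset.ne_of_mem_erase hi
      simp [he, hh, hi0, neg_smul]
    have hxs : ∑ i ∈ Finset.univ.erase (0 : Fin n), c i • (w i - w 0) = x := by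
      rw [← hc, ← Finset.add_sum_erase _ _ (Finset.mem_univ (0 : Fin n))]
      simp
    rw [Finset.sum_congr rfl hterm, Finset.sum_neg_distrib, hxs]
    simp
  exact Fintype.not_linearIndependent_iff.mpr ⟨e, hcomb, 0, by simp [he]⟩

lemma mem_span_of_dep {n : ℕ} [NeZero n] (w : Fin n → Euc n)
    (hw : LinearIndependent ℝ w) (x : Euc n)
    (hdep : ¬ LinearIndependent ℝ (fun i : Fin n => if i = 0 then x else w i - w 0)) :
    x ∈ Submodule.span ℝ (Set.range fun i => w i - w 0) := by
  classical
  obtain ⟨c, hcomb, i₀, hi₀⟩ := Fintype.not_linearIndependent_iff.mp hdep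
  rw [← Finset.add_sum_erase _ _ (Finset.mem_univ (0 : Fin n))] at hcomb
  have hterm : ∀ i ∈ Finset.univ.erase (0 : Fin n),
      c i • (if i = 0 then x else w i - w 0) = c i • (w i - w 0) := by
    intro i hi
    have hi0 : i ≠ 0 := Finset.ne_of_mem_erase hi
    simp [hi0]
  rw [Finset.sum_congr rfl hterm] at hcomb
  simp only [eq_self_iff_true, if_true] at hcomb
  -- hcomb : c 0 • x + ∑ i in erase, c i • (w i - w 0) = 0
  by_cases hc0 : c 0 = 0
  · exfalso
    rw [hc0, zero_smul, zero_add] at hcomb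
    -- the diffs combination vanishes; contradict independence of w
    set d : Fin n → ℝ := fun i =>
      if i = 0 then -(∑ j ∈ Finset.univ.erase (0 : Fin n), c j) else c i with hd
    have hdcomb : ∑ i, d i • w i = 0 := by
      rw [← Finset.add_sum_erase _ _ (Finset.mem_univ (0 : Fin n))]
      have h1 : d 0 • w 0 = -(∑ j ∈ Finset.univ.erase (0 : Fin n), c j) • w 0 := by
        simp [hd]
      have h2 : ∀ i ∈ Finset.univ.erase (0 : Fin n), d i • w i = c i • w i := by
        intro i hi
        have hi0 : i ≠ 0 := Finset.ne_of_mem_erase hi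
        simp [hd, hi0]
      rw [h1, Finset.sum_congr rfl h2]
      have hexp : ∑ i ∈ Finset.univ.erase (0 : Fin n), c i • (w i - w 0)
          = ∑ i ∈ Finset.univ.erase (0 : Fin n), c i • w i
            - (∑ i ∈ Finset.univ.erase (0 : Fin n), c i) • w 0 := by
        simp only [smul_sub]
        rw [Finset.sum_sub_distrib, ← Finset.sum_smul]
      rw [hexp] at hcomb
      rw [neg_smul, ← hcomb]
      abel
    have hz := Fintype.linearIndependent_iff.mp hw d hdcomb
    rcases eq_or_ne i₀ 0 with h | h
    · rw [h] at hi₀; exact hi₀ hc0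
    · have := hz i₀
      simp [hd, h] at this
      exact hi₀ this
  · have hmem : (c 0) • x ∈ Submodule.span ℝ (Set.range fun i => w i - w 0) := by
      have h3 : c 0 • x = -∑ i ∈ Finset.univ.erase (0 : Fin n), c i • (w i - w 0) :=
        eq_neg_of_add_eq_zero_left hcomb
      rw [h3]
      exact Submodule.neg_mem _ (Submodule.sum_mem _ fun i _ =>
        Submodule.smul_mem _ _ (Submodule.subset_span ⟨i, rfl⟩))
    have hfin := Submodule.smul_mem _ (c 0)⁻¹ hmem
    rwa [inv_smul_smul₀ hc0] at hfin

lemma span_diffs_ne_top {n : ℕ} [NeZero n] (w : Fin n → Euc n)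
    (hw : LinearIndependent ℝ w) :
    Submodule.span ℝ (Set.range fun i => w i - w 0) ≠ ⊤ := by
  obtain ⟨f, hf⟩ := exists_f w hw
  intro htop
  have hker : Submodule.span ℝ (Set.range fun i => w i - w 0) ≤ LinearMap.ker f := by
    rw [Submodule.span_le]
    rintro y ⟨i, rfl⟩
    simp [LinearMap.mem_ker, map_sub, hf]
  have hmem0 : w 0 ∈ Submodule.span ℝ (Set.range fun i => w i - w 0) := by
    rw [htop]; exact Submodule.mem_top
  have hmem := hker hmem0
  rw [LinearMap.mem_ker, hf 0] at hmem
  norm_num at hmem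

/-- Negation of the first coordinate, as a measurable equivalence. -/
def Phi (n : ℕ) : (Fin (n+1) → sphere (0 : Euc n) 1) ≃ᵐ (Fin (n+1) → sphere (0 : Euc n) 1) where
  toEquiv :=
  { toFun := fun V i => if i = 0 then -(V i) else V i
    invFun := fun V i => if i = 0 then -(V i) else V i
    left_inv := fun V => by
      funext i
      by_cases h : i = 0 <;> simp [h]
    right_inv := fun V => by
      funext i
      by_cases h : i = 0 <;> simp [h] }
  measurable_toFun := by
    apply measurable_pi_iff.mpr
    intro i
    simp only [Equiv.coe_fn_mk]
    split_ifs with h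
    · exact (continuous_neg.measurable).comp (measurable_pi_apply i)
    · exact measurable_pi_apply i
  measurable_invFun := by
    apply measurable_pi_iff.mpr
    intro i
    simp only [Equiv.coe_fn_symm_mk]
    split_ifs with h
    · exact (continuous_neg.measurable).comp (measurable_pi_apply i)
    · exact measurable_pi_apply i

lemma Phi_pres (n : ℕ) :
    MeasurePreserving ⇑(Phi n) (Measure.pi fun _ : Fin (n+1) => sphereUniform n)
      (Measure.pi fun _ : Fin (n+1) => sphereUniform n) := by
  have h : ⇑(Phi n) = fun (V : Fin (n+1) → sphere (0 : Euc n) 1) i =>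
      (if i = 0 then (fun x : sphere (0 : Euc n) 1 => -x) else id) (V i) := by
    funext V i
    show (if i = 0 then -(V i) else V i) = _
    by_cases hi : i = 0
    · rw [if_pos hi, if_pos hi]
    · rw [if_neg hi, if_neg hi]; rfl
  rw [h]
  refine measurePreserving_pi _ _ (fun i => ?_)
  by_cases hi : i = 0
  · rw [if_pos hi]
    exact ⟨continuous_neg.measurable, map_neg_sphereUniform n⟩
  · rw [if_neg hi]
    exact MeasurePreserving.id _

/-- The signed volume of the pinned simplex under the pointy condition has zero mean:
`E[s(V₀,…,V_n) Δ_n(0,V₁,…,V_n) 1_Pointy(V₀;V₁,…,V_n)] = 0`. -/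
theorem expectation_signed_pinned_simplex_pointy (n : ℕ) (hn : 2 ≤ n) :
    (∫ V : Fin (n + 1) → Metric.sphere (0 : Euc n) 1,
        sgn ((0 : Euc n) ∈ interior (convexHull ℝ (Set.range fun i => (V i : Euc n)))) *
          (volume (convexHull ℝ
            (insert (0 : Euc n) (Set.range fun i : Fin n => (V i.succ : Euc n))))).toReal *
          indic (Pointy ((V 0 : Euc n)) fun i : Fin n => (V i.succ : Euc n))
        ∂(Measure.pi fun _ => sphereUniform n)) = 0 := by
  classical
  haveI : NeZero n := ⟨by omega⟩
  set μ := Measure.pi fun _ : Fin (n + 1) => sphereUniform n with hμ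
  set F : (Fin (n + 1) → sphere (0 : Euc n) 1) → ℝ := fun V =>
    sgn ((0 : Euc n) ∈ interior (convexHull ℝ (Set.range fun i => (V i : Euc n)))) *
      (volume (convexHull ℝ
        (insert (0 : Euc n) (Set.range fun i : Fin n => (V i.succ : Euc n))))).toReal *
      indic (Pointy ((V 0 : Euc n)) fun i : Fin n => (V i.succ : Euc n)) with hFdef
  -- bad events
  set bad₁ : Set (Fin (n+1) → sphere (0 : Euc n) 1) :=
    {V | ¬ LinearIndependent ℝ (fun i : Fin n => (V i.succ : Euc n))} with hbad₁
  set bad₂ : Set (Fin (n+1) → sphere (0 : Euc n) 1) :=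
    {V | ¬ LinearIndependent ℝ (fun i : Fin n =>
      if i = 0 then (V 0 : Euc n)
      else (V i.succ : Euc n) - (V (0 : Fin n).succ : Euc n))} with hbad₂
  have hwae : ∀ᵐ w ∂(Measure.pi fun _ : Fin n => sphereUniform n),
      LinearIndependent ℝ (fun i => ((w i : Euc n))) := by
    rw [ae_iff]
    exact dep_null n n le_rfl
  have hbad₁null : μ bad₁ = 0 := by
    refine pi_succ_null _ ?_ ?_
    · exact (closed_not_linIndep
        (fun i => (continuous_apply (i.succ : Fin (n+1))).subtype_val)).measurableSet
    · filter_upwards [hwae] with w hw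
      have hempty : {x : sphere (0 : Euc n) 1 | Fin.cons x w ∈ bad₁} = ∅ := by
        rw [Set.eq_empty_iff_forall_notMem]
        intro x hx
        apply hx
        have hfam : (fun i : Fin n =>
            (((Fin.cons x w : Fin (n+1) → sphere (0 : Euc n) 1) i.succ) : Euc n))
            = fun i => (w i : Euc n) := by
          funext i; rw [Fin.cons_succ]
        rw [hfam]
        exact hw
      rw [hempty, measure_empty]
  have hbad₂null : μ bad₂ = 0 := by
    refine pi_succ_null _ ?_ ?_
    · refine (closed_not_linIndep (g := fun (i : Fin n) (V : Fin (n+1) → sphere (0 : Euc n) 1) =>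
        if i = 0 then (V 0 : Euc n)
        else (V i.succ : Euc n) - (V (0 : Fin n).succ : Euc n)) (fun i => ?_)).measurableSet
      split_ifs with hi
      · exact (continuous_apply (0 : Fin (n+1))).subtype_val
      · exact ((continuous_apply (i.succ : Fin (n+1))).subtype_val).sub
          ((continuous_apply ((0 : Fin n).succ : Fin (n+1))).subtype_val)
    · filter_upwards [hwae] with w hw
      have hsub : {x : sphere (0 : Euc n) 1 | Fin.cons x w ∈ bad₂} ⊆
          {x : sphere (0 : Euc n) 1 | (x : Euc n) ∈ Submodule.span ℝ
            (Set.range fun i : Fin n => (w i : Euc n) - (w 0 : Euc n))} := by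
        intro x hx
        simp only [Set.mem_setOf_eq]
        have hfam : (fun i : Fin n =>
            if i = 0 then ((Fin.cons x w : Fin (n+1) → sphere (0 : Euc n) 1) 0 : Euc n)
            else ((Fin.cons x w : Fin (n+1) → sphere (0 : Euc n) 1) i.succ : Euc n)
              - ((Fin.cons x w : Fin (n+1) → sphere (0 : Euc n) 1) (0 : Fin n).succ : Euc n))
            = fun i : Fin n => if i = 0 then (x : Euc n)
              else (w i : Euc n) - (w 0 : Euc n) := by
          funext i
          rw [Fin.cons_zero, Fin.cons_succ, Fin.cons_succ]
        have hx' : ¬ LinearIndependent ℝ (fun i : Fin n =>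
            if i = 0 then ((Fin.cons x w : Fin (n+1) → sphere (0 : Euc n) 1) 0 : Euc n)
            else ((Fin.cons x w : Fin (n+1) → sphere (0 : Euc n) 1) i.succ : Euc n)
              - ((Fin.cons x w : Fin (n+1) → sphere (0 : Euc n) 1) (0 : Fin n).succ : Euc n)) := hx
        rw [hfam] at hx'
        exact mem_span_of_dep _ hw _ hx'
      exact measure_mono_null hsub (sphere_submodule_null n (span_diffs_ne_top _ hw))
  have hg1 : ∀ᵐ V ∂μ, V ∉ bad₁ := measure_eq_zero_iff_ae_notMem.mp hbad₁null
  have hg2 : ∀ᵐ V ∂μ, V ∉ bad₂ := measure_eq_zero_iff_ae_notMem.mp hbad₂null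
  -- the sign-flip identity
  have hflip : ∀ᵐ V ∂μ, F (Phi n V) = - F V := by
    filter_upwards [hg1, hg2] with V h1' h2'
    have h1 : LinearIndependent ℝ (fun i : Fin n => (V i.succ : Euc n)) := not_not.mp h1'
    have h2 : LinearIndependent ℝ (fun i : Fin n =>
        if i = 0 then (V 0 : Euc n)
        else (V i.succ : Euc n) - (V (0 : Fin n).succ : Euc n)) := not_not.mp h2'
    simp only [hFdef]
    have hPhi0 : ((Phi n V 0 : sphere (0 : Euc n) 1) : Euc n) = -(V 0 : Euc n) := by
      show (((if (0 : Fin (n+1)) = 0 then -(V 0) else V 0) : sphere (0 : Euc n) 1) : Euc n)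
        = -(V 0 : Euc n)
      rw [if_pos rfl, coe_neg_sphere]
    have hPhisucc : ∀ j : Fin n, Phi n V j.succ = V j.succ := by
      intro j
      show (if (j.succ : Fin (n+1)) = 0 then -(V j.succ) else V j.succ) = V j.succ
      rw [if_neg (Fin.succ_ne_zero j)]
    have hr0 : (fun i : Fin (n+1) => (V i : Euc n))
        = Fin.cons ((V 0 : Euc n)) (fun i : Fin n => (V i.succ : Euc n)) := by
      funext i
      induction i using Fin.cases with
      | zero => rw [Fin.cons_zero]
      | succ j => rw [Fin.cons_succ]
    have hr1 : (fun i : Fin (n+1) => (Phi n V i : Euc n))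
        = Fin.cons (-(V 0 : Euc n)) (fun i : Fin n => (V i.succ : Euc n)) := by
      funext i
      induction i using Fin.cases with
      | zero => rw [Fin.cons_zero]; exact hPhi0
      | succ j => rw [Fin.cons_succ, hPhisucc j]
    have hr2 : (fun i : Fin n => (Phi n V i.succ : Euc n))
        = fun i : Fin n => (V i.succ : Euc n) := by
      funext i
      rw [hPhisucc i]
    rw [hr0, hr1, hr2, hPhi0]
    set v₀ : Euc n := (V 0 : Euc n) with hv₀def
    set v : Fin n → Euc n := fun i : Fin n => (V i.succ : Euc n) with hvdef
    by_cases hP : Pointy v₀ v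
    · have hP' : Pointy (-v₀) v := (pointy_neg_iff v₀ v).mpr hP
      obtain ⟨f, hf⟩ := exists_f v h1
      have hfv₀ : f v₀ ≠ 0 := by
        intro h0
        exact dep_of_mem_span v v₀ (mem_span_diffs_of_f_eq_zero v h1 f hf h0) h2
      have hv₀n : ‖v₀‖ = 1 := by
        have h := (V 0).2
        rwa [mem_sphere_zero_iff_norm] at h
      rcases lt_or_gt_of_ne hfv₀ with hneg | hpos
      · have hA : (0 : Euc n) ∈ interior (convexHull ℝ
            (Set.range (Fin.cons v₀ v : Fin (n+1) → Euc n))) :=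
          pos_lemma (by omega) v₀ hv₀n v h1 f hf hneg hP
        have hB : (0 : Euc n) ∉ interior (convexHull ℝ
            (Set.range (Fin.cons (-v₀) v : Fin (n+1) → Euc n))) := by
          intro hmem
          refine neg_lemma (-v₀) v f hf ?_ (interior_subset hmem)
          rw [map_neg]; linarith
        simp only [sgn, indic, if_pos hA, if_neg hB, if_pos hP, if_pos hP']
        ring
      · have hA : (0 : Euc n) ∉ interior (convexHull ℝ
            (Set.range (Fin.cons v₀ v : Fin (n+1) → Euc n))) := by
          intro hmem
          exact neg_lemma v₀ v f hf hpos (interior_subset hmem)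
        have hB : (0 : Euc n) ∈ interior (convexHull ℝ
            (Set.range (Fin.cons (-v₀) v : Fin (n+1) → Euc n))) := by
          refine pos_lemma (by omega) (-v₀) (by rw [norm_neg]; exact hv₀n) v h1 f hf ?_ hP'
          rw [map_neg]; linarith
        simp only [sgn, indic, if_neg hA, if_pos hB, if_pos hP, if_pos hP']
        ring
    · have hP' : ¬ Pointy (-v₀) v := fun h => hP ((pointy_neg_iff v₀ v).mp h)
      simp only [indic, if_neg hP, if_neg hP']
      ring
  -- conclude by the change of variables
  have hpres : MeasurePreserving ⇑(Phi n) μ μ := Phi_pres n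
  have hcomp := hpres.integral_comp (Phi n).measurableEmbedding F
  have hneg : (∫ V, F (Phi n V) ∂μ) = - ∫ V, F V ∂μ := by
    rw [integral_congr_ae hflip, integral_neg]
  have hI : (∫ V, F V ∂μ) = - ∫ V, F V ∂μ := by
    rw [← hneg]
    exact hcomp.symm
  linarith
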